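/- arXiv:1803.01289 — 2 statements merged into one kernel-verified Lean document; each statement's English description precedes it below -/
import Mathlib

section
/- Let G be a Lie group (a smooth manifold modeled on a finite-dimensional real normed space with smooth multiplication and inversion). Suppose ω assigns to each g ∈ G an alternating ℝ-bilinear form ω_g on the tangent space T_gG, and suppose ω is multiplicative in the sense that for all g, h ∈ G, all x, x' ∈ T_gG and all y, y' ∈ T_hG, ω_{gh}(D(r_h)_g x + D(l_g)_h y, D(r_h)_g x' + D(l_g)_h y') = ω_g(x, x') + ω_h(y, y'). Then ω_g = 0 for every g ∈ G. -/
open Manifold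

/-- If a family `ω` of alternating bilinear forms on the tangent spaces of a
Lie group `G` is multiplicative (i.e. satisfies the symplectic-groupoid compatibility condition
`m^*ω = π₁^*ω + π₂^*ω`), then `ω` vanishes identically. -/
theorem multiplicative_two_form_on_lie_group_is_zero
    {E : Type*} [NormedAddCommGroup E] [NormedSpace ℝ E] [FiniteDimensional ℝ E]
    {G : Type*} [TopologicalSpace G] [ChartedSpace E G] [Group G]
    [IsManifold 𝓘(ℝ, E) (⊤ : ℕ∞) G] [LieGroup 𝓘(ℝ, E) (⊤ : ℕ∞) G]
    (ω : ∀ g : G, (TangentSpace 𝓘(ℝ, E) g) [⋀^Fin 2]→ₗ[ℝ] ℝ)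
    (hmult : ∀ g h : G, ∀ x x' : TangentSpace 𝓘(ℝ, E) g, ∀ y y' : TangentSpace 𝓘(ℝ, E) h,
      ω (g * h)
        ![mfderiv 𝓘(ℝ, E) 𝓘(ℝ, E) (fun a : G => a * h) g x
            + mfderiv 𝓘(ℝ, E) 𝓘(ℝ, E) (fun b : G => g * b) h y,
          mfderiv 𝓘(ℝ, E) 𝓘(ℝ, E) (fun a : G => a * h) g x'
            + mfderiv 𝓘(ℝ, E) 𝓘(ℝ, E) (fun b : G => g * b) h y']
        = ω g ![x, x'] + ω h ![y, y']) :
    ∀ g : G, ω g = 0 := by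
  let ω' : G → (E [⋀^Fin 2]→ₗ[ℝ] ℝ) := ω
  have hm : ∀ g h : G, ∀ x x' y y' : E,
      ω' (g * h)
        ![(mfderiv 𝓘(ℝ, E) 𝓘(ℝ, E) (fun a : G => a * h) g : E →L[ℝ] E) x
            + (mfderiv 𝓘(ℝ, E) 𝓘(ℝ, E) (fun b : G => g * b) h : E →L[ℝ] E) y,
          (mfderiv 𝓘(ℝ, E) 𝓘(ℝ, E) (fun a : G => a * h) g : E →L[ℝ] E) x'
            + (mfderiv 𝓘(ℝ, E) 𝓘(ℝ, E) (fun b : G => g * b) h : E →L[ℝ] E) y']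
        = ω' g ![x, x'] + ω' h ![y, y'] := hmult
  -- the two translation derivatives at 1 with g = h = 1 are the identity
  have hA : (mfderiv 𝓘(ℝ, E) 𝓘(ℝ, E) (fun a : G => a * 1) 1 : E →L[ℝ] E)
      = ContinuousLinearMap.id ℝ E := by
    have hf : (fun a : G => a * 1) = id := funext fun a => mul_one a
    exact (congrArg (fun f : G → G => show E →L[ℝ] E from mfderiv 𝓘(ℝ, E) 𝓘(ℝ, E) f 1) hf).trans
      mfderiv_id
  have hB : (mfderiv 𝓘(ℝ, E) 𝓘(ℝ, E) (fun b : G => 1 * b) 1 : E →L[ℝ] E)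
      = ContinuousLinearMap.id ℝ E := by
    have hf : (fun b : G => 1 * b) = id := funext fun b => one_mul b
    exact (congrArg (fun f : G → G => show E →L[ℝ] E from mfderiv 𝓘(ℝ, E) 𝓘(ℝ, E) f 1) hf).trans
      mfderiv_id
  -- Step 1: ω' 1 = 0
  have h1 : ∀ x x' : E, ω' (1 : G) ![x, x'] = 0 := by
    intro x x'
    have key := hm 1 1 x x' x x'
    rw [hA, hB, one_mul] at key
    have key2 : ω' (1:G) ![x + x, x' + x'] = ω' (1:G) ![x, x'] + ω' (1:G) ![x, x'] := key
    have e1 : (![x + x, x' + x'] : Fin 2 → E)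
        = Function.update ![(2:ℝ) • x, x'] 1 ((2:ℝ) • x') := by
      ext i; fin_cases i <;> simp [two_smul]
    have e2 : Function.update (![(2:ℝ) • x, x'] : Fin 2 → E) 1 x' = ![(2:ℝ) • x, x'] := by
      ext i; fin_cases i <;> simp
    have e3 : (![(2:ℝ) • x, x'] : Fin 2 → E) = Function.update ![x, x'] 0 ((2:ℝ) • x) := by
      ext i; fin_cases i <;> simp
    have e4 : Function.update (![x, x'] : Fin 2 → E) 0 x = ![x, x'] := by
      ext i; fin_cases i <;> simp
    rw [e1, (ω' (1:G)).map_update_smul, e2, e3, (ω' (1:G)).map_update_smul, e4, smul_smul] at key2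
    have key' : (2 * 2 : ℝ) * ω' (1:G) ![x, x'] = ω' (1:G) ![x, x'] + ω' (1:G) ![x, x'] := key2
    linarith
  -- Step 2: general g
  intro g
  have h2 : ∀ x x' : E, ω' g ![x, x'] = 0 := by
    intro x x'
    have key := hm g g⁻¹ x x' 0 0
    rw [mul_inv_cancel] at key
    erw [map_zero, add_zero] at key
    have hz : ω' g⁻¹ ![(0:E), 0] = 0 := (ω' g⁻¹).map_coord_zero 0 (by simp)
    erw [hz, add_zero, h1] at key
    linarith [key]
  show ω' g = 0
  ext v
  have e0 : v = ![v 0, v 1] := by ext i; fin_cases i <;> simp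
  rw [e0]
  simpa using h2 (v 0) (v 1)
end

section
/- Let G be a Lie group (a smooth manifold modeled on a finite-dimensional real normed space with smooth multiplication and inversion) whose tangent space at the identity T_eG is nontrivial (G has positive dimension). Then there is no family ω assigning to each g ∈ G a nondegenerate alternating ℝ-bilinear form ω_g on T_gG such that for all g, h ∈ G, all x, x' ∈ T_gG and all y, y' ∈ T_hG, ω_{gh}(D(r_h)_g x + D(l_g)_h y, D(r_h)_g x' + D(l_g)_h y') = ω_g(x, x') + ω_h(y, y'). In particular, there are no symplectic Lie groupoids over a point. -/
open Manifold

/-- A positive-dimensional Lie group `G` admits no family of nondegenerate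
alternating bilinear forms on its tangent spaces satisfying the multiplicativity condition
`m^*ω = π₁^*ω + π₂^*ω`; in particular there are no symplectic Lie groupoids over a point. -/
theorem no_symplectic_lie_groupoid_over_point
    {E : Type*} [NormedAddCommGroup E] [NormedSpace ℝ E] [FiniteDimensional ℝ E]
    {G : Type*} [TopologicalSpace G] [ChartedSpace E G] [Group G]
    [IsManifold 𝓘(ℝ, E) (⊤ : ℕ∞) G] [LieGroup 𝓘(ℝ, E) (⊤ : ℕ∞) G]
    [Nontrivial (TangentSpace 𝓘(ℝ, E) (1 : G))] :
    ¬ ∃ ω : ∀ g : G, (TangentSpace 𝓘(ℝ, E) g) [⋀^Fin 2]→ₗ[ℝ] ℝ,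
      (∀ g : G, ∀ x : TangentSpace 𝓘(ℝ, E) g, x ≠ 0 →
        ∃ y : TangentSpace 𝓘(ℝ, E) g, ω g ![x, y] ≠ 0) ∧
      (∀ g h : G, ∀ x x' : TangentSpace 𝓘(ℝ, E) g, ∀ y y' : TangentSpace 𝓘(ℝ, E) h,
        ω (g * h)
          ![mfderiv 𝓘(ℝ, E) 𝓘(ℝ, E) (fun a : G => a * h) g x
              + mfderiv 𝓘(ℝ, E) 𝓘(ℝ, E) (fun b : G => g * b) h y,
            mfderiv 𝓘(ℝ, E) 𝓘(ℝ, E) (fun a : G => a * h) g x'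
              + mfderiv 𝓘(ℝ, E) 𝓘(ℝ, E) (fun b : G => g * b) h y']
          = ω g ![x, x'] + ω h ![y, y']) := by
  rintro ⟨ω, hnd, hmul⟩
  obtain ⟨x, hx⟩ := exists_ne (0 : TangentSpace 𝓘(ℝ, E) (1 : G))
  obtain ⟨y, hy⟩ := hnd 1 x hx
  have h := hmul 1 1 x 0 0 y
  have e1 : (fun a : G => a * 1) = id := funext mul_one
  have e2 : (fun b : G => (1:G) * b) = id := funext one_mul
  rw [e1, e2, mfderiv_id] at h
  have z1 : ω 1 ![x, (0 : TangentSpace 𝓘(ℝ, E) (1 : G))] = 0 :=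
    (ω 1).map_coord_zero 1 rfl
  have z2 : ω 1 ![(0 : TangentSpace 𝓘(ℝ, E) (1 : G)), y] = 0 :=
    (ω 1).map_coord_zero 0 rfl
  simp only [z1, z2, add_zero] at h
  apply hy
  rw [← h]
  congr 1
  · rw [mul_one]
  · funext i
    fin_cases i
    · exact (add_zero x).symm
    · exact (zero_add y).symm
end
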